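/- Let b be a weighted graph over V, U ⊆ V, π = π_U^b, and x, y ∈ V with x ≠ y and x ⇝ y (π(x,y) > 0). Then exactly one of the following holds: (i) y ⇝ x and y ∈ U; (ii) y ∈ V\U (y is absorbing); (iii) y ∈ U, b(x) ≺≺ b(y), and x, y lie in different strongly connected components. -/

import Mathlib

open Classical
open scoped ENNReal

namespace NAG

/-- The real part of an at most finite element of an ordered field:
the supremum of the rationals below it. -/
noncomputable def rp {K : Type*} [Field K] [LinearOrder K] [IsStrictOrderedRing K] (k : K) : ℝ :=
  sSup {r : ℝ | ∃ q : ℚ, r = (q : ℝ) ∧ (q : K) ≤ k}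

/-- `k₁ ≃ k₂` : the quotient is bounded above and below by positive rationals. -/
def Comparable {K : Type*} [Field K] [LinearOrder K] [IsStrictOrderedRing K] (k₁ k₂ : K) : Prop :=
  ∃ c₁ c₂ : ℚ, 0 < c₁ ∧ 0 < c₂ ∧ (c₁ : K) < k₁ / k₂ ∧ k₁ / k₂ < (c₂ : K)

/-- `k₁ ≺≺ k₂` : the quotient is smaller than every positive rational. -/
def MuchLT {K : Type*} [Field K] [LinearOrder K] [IsStrictOrderedRing K] (k₁ k₂ : K) : Prop :=
  ∀ c : ℚ, 0 < c → k₁ / k₂ < (c : K)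

/-- `k₁ ≾ k₂` : the quotient is bounded above by some positive rational. -/
def LessSim {K : Type*} [Field K] [LinearOrder K] [IsStrictOrderedRing K] (k₁ k₂ : K) : Prop :=
  ∃ c : ℚ, 0 < c ∧ k₁ / k₂ < (c : K)

/-- A (locally finite) weighted graph over `V` with values in an ordered field `K`. -/
structure Graph (V K : Type*) [Field K] [LinearOrder K] [IsStrictOrderedRing K] where
  w : V → V → K
  symm : ∀ x y, w x y = w y x
  nonneg : ∀ x y, 0 ≤ w x y
  loopless : ∀ x, w x x = 0
  locFin : ∀ x, {y | w x y ≠ 0}.Finite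

variable {V K : Type*} [Field K] [LinearOrder K] [IsStrictOrderedRing K]

/-- `b(x) = Σ_y b(x,y)`. -/
noncomputable def Graph.deg (G : Graph V K) (x : V) : K := ∑ᶠ y, G.w x y

def Graph.Adj (G : Graph V K) (x y : V) : Prop := 0 < G.w x y

def Graph.Connected (G : Graph V K) : Prop :=
  ∀ x y : V, ∃ (n : ℕ) (p : ℕ → V), p 0 = x ∧ p n = y ∧ ∀ i < n, G.Adj (p i) (p (i + 1))

def Graph.ConnectedOn (G : Graph V K) (S : Set V) : Prop :=
  ∀ x ∈ S, ∀ y ∈ S, ∃ (n : ℕ) (p : ℕ → V),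
    p 0 = x ∧ p n = y ∧ (∀ i ≤ n, p i ∈ S) ∧ ∀ i < n, G.Adj (p i) (p (i + 1))

/-- normalized weight `p(x,y) = b(x,y)/b(x)`. -/
noncomputable def Graph.p (G : Graph V K) (x y : V) : K := G.w x y / G.deg x

/-- The real transition matrix `π_U^b`. -/
noncomputable def Graph.pi (G : Graph V K) (U : Set V) (x y : V) : ℝ :=
  if x ∈ U then rp (G.p x y) else if x = y then 1 else 0

/-- A directed path of length `n` from `x` to `y` for a real kernel `m`. -/
def DirPath {V : Type*} (m : V → V → ℝ) (x y : V) (n : ℕ) (p : ℕ → V) : Prop :=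
  p 0 = x ∧ p n = y ∧ ∀ i < n, 0 < m (p i) (p (i + 1))

/-- `x → y` : reachability by directed paths. -/
def Reaches {V : Type*} (m : V → V → ℝ) (x y : V) : Prop :=
  x = y ∨ ∃ n p, DirPath m x y n p

/-- `x ↔ y` : mutual reachability (same strongly connected component). -/
def SameSCC {V : Type*} (m : V → V → ℝ) (x y : V) : Prop :=
  Reaches m x y ∧ Reaches m y x

section Aux

lemma rp_pos_of {k : K} (q : ℚ) (hq : 0 < q) (hk : (q : K) ≤ k) (hb : k ≤ 1) :
    0 < rp k := by
  have hne : ((q : ℝ)) ∈ {r : ℝ | ∃ q' : ℚ, r = (q' : ℝ) ∧ (q' : K) ≤ k} := ⟨q, rfl, hk⟩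
  have hbdd : BddAbove {r : ℝ | ∃ q' : ℚ, r = (q' : ℝ) ∧ (q' : K) ≤ k} := by
    refine ⟨1, fun r hr => ?_⟩
    obtain ⟨q', rfl, hq'⟩ := hr
    have h1 : (q' : K) ≤ 1 := le_trans hq' hb
    have h2 : q' ≤ 1 := by exact_mod_cast h1
    exact_mod_cast h2
  have hle := le_csSup hbdd hne
  have hq' : (0 : ℝ) < q := by exact_mod_cast hq
  exact lt_of_lt_of_le hq' hle

lemma exists_rat_of_rp_pos {k : K} (h : 0 < rp k) :
    ∃ q : ℚ, 0 < q ∧ (q : K) ≤ k := by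
  by_contra hcon
  push_neg at hcon
  have hle : rp k ≤ 0 := by
    apply Real.sSup_nonpos
    rintro r ⟨q, rfl, hq⟩
    have hq0 : q ≤ 0 := by
      by_contra h0
      push_neg at h0
      exact absurd hq (not_le_of_gt (hcon q h0))
    exact_mod_cast hq0
  exact absurd h (not_lt_of_ge hle)

lemma Graph.w_le_deg (G : Graph V K) (x y : V) : G.w x y ≤ G.deg x :=
  single_le_finsum y (G.locFin x) (G.nonneg x)

lemma Graph.p_le_one (G : Graph V K) (hdeg : ∀ x, 0 < G.deg x) (x y : V) :
    G.p x y ≤ 1 :=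
  (div_le_one (hdeg x)).mpr (G.w_le_deg x y)

/-- From a positive step with `x ≠ y` we get `x ∈ U` and a positive rational lower
bound on `p x y`. -/
lemma step_analysis (G : Graph V K) (U : Set V) {x y : V}
    (hne : x ≠ y) (hstep : 0 < G.pi U x y) :
    x ∈ U ∧ ∃ q : ℚ, 0 < q ∧ (q : K) ≤ G.p x y := by
  by_cases hx : x ∈ U
  · refine ⟨hx, ?_⟩
    have hpi : G.pi U x y = rp (G.p x y) := by simp [Graph.pi, hx]
    rw [hpi] at hstep
    exact exists_rat_of_rp_pos hstep
  · exfalso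
    have hpi : G.pi U x y = 0 := by simp [Graph.pi, hx, hne]
    rw [hpi] at hstep
    exact lt_irrefl _ hstep

lemma chain_deg_le (G : Graph V K) (hdeg : ∀ x, 0 < G.deg x) (U : Set V) :
    ∀ (n : ℕ) (p : ℕ → V), (∀ i < n, 0 < G.pi U (p i) (p (i + 1))) →
      ∃ C : ℚ, 0 < C ∧ G.deg (p 0) ≤ (C : K) * G.deg (p n) := by
  intro n
  induction n with
  | zero => intro p _; exact ⟨1, one_pos, by simp⟩
  | succ n ih =>
    intro p hp
    obtain ⟨C, hC, hCle⟩ := ih (fun i => p (i + 1)) (fun i hi => hp (i + 1) (by omega))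
    have hstep : 0 < G.pi U (p 0) (p 1) := hp 0 (by omega)
    by_cases hx : p 0 ∈ U
    · have hpi : G.pi U (p 0) (p 1) = rp (G.p (p 0) (p 1)) := by simp [Graph.pi, hx]
      rw [hpi] at hstep
      obtain ⟨q, hq, hqle⟩ := exists_rat_of_rp_pos hstep
      have hw : (q : K) * G.deg (p 0) ≤ G.w (p 0) (p 1) := by
        rw [Graph.p, le_div_iff₀ (hdeg (p 0))] at hqle
        linarith
      have hw2 : G.w (p 0) (p 1) ≤ G.deg (p 1) := by
        rw [G.symm]; exact G.w_le_deg (p 1) (p 0)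
      have hq0 : (0 : K) < (q : K) := by exact_mod_cast hq
      refine ⟨C / q, by positivity, ?_⟩
      have h1 : G.deg (p 0) ≤ G.deg (p 1) / (q : K) := by
        rw [le_div_iff₀ hq0]; nlinarith
      have h2 : G.deg (p 1) / (q : K) ≤ ((C : K) * G.deg (p (n + 1))) / (q : K) := by
        gcongr
      push_cast
      calc G.deg (p 0) ≤ G.deg (p 1) / (q : K) := h1
        _ ≤ ((C : K) * G.deg (p (n + 1))) / (q : K) := h2
        _ = (C : K) / (q : K) * G.deg (p (n + 1)) := by ring
    · have heq : p 0 = p 1 := by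
        by_contra hne
        have hpi : G.pi U (p 0) (p 1) = 0 := by simp [Graph.pi, hx, hne]
        rw [hpi] at hstep
        exact lt_irrefl _ hstep
      exact ⟨C, hC, by rw [heq]; exact hCle⟩

lemma reaches_deg_le (G : Graph V K) (hdeg : ∀ x, 0 < G.deg x) (U : Set V) {a b : V}
    (h : Reaches (G.pi U) a b) :
    ∃ C : ℚ, 0 < C ∧ G.deg a ≤ (C : K) * G.deg b := by
  rcases h with rfl | ⟨n, p, hp0, hpn, hstep⟩
  · exact ⟨1, one_pos, by simp⟩
  · obtain ⟨C, hC, hle⟩ := chain_deg_le G hdeg U n p hstep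
    rw [hp0, hpn] at hle
    exact ⟨C, hC, hle⟩

end Aux

/-- if `x ≠ y` and `x ⇝ y`, then exactly one of the following holds:
(i) `y ⇝ x` and `y ∈ U`; (ii) `y ∉ U` (y is absorbing); (iii) `y ∈ U`,
`b(x) ≺≺ b(y)` and `x, y` are in different strongly connected components. -/
theorem step_trichotomy {V K : Type*} [Field K] [LinearOrder K] [IsStrictOrderedRing K] [Countable V]
    (G : Graph V K) (hconn : G.Connected) (hdeg : ∀ x, 0 < G.deg x)
    (U : Set V) (x y : V) (hne : x ≠ y) (hstep : 0 < G.pi U x y) :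
    ((0 < G.pi U y x ∧ y ∈ U) ∧ ¬(y ∉ U) ∧
        ¬(y ∈ U ∧ MuchLT (G.deg x) (G.deg y) ∧ ¬ SameSCC (G.pi U) x y)) ∨
    (¬(0 < G.pi U y x ∧ y ∈ U) ∧ (y ∉ U) ∧
        ¬(y ∈ U ∧ MuchLT (G.deg x) (G.deg y) ∧ ¬ SameSCC (G.pi U) x y)) ∨
    (¬(0 < G.pi U y x ∧ y ∈ U) ∧ ¬(y ∉ U) ∧
        (y ∈ U ∧ MuchLT (G.deg x) (G.deg y) ∧ ¬ SameSCC (G.pi U) x y)) := by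
  obtain ⟨hxU, q, hq, hqle⟩ := step_analysis G U hne hstep
  by_cases hyU : y ∈ U
  · by_cases hyx : 0 < G.pi U y x
    · -- case (i)
      left
      refine ⟨⟨hyx, hyU⟩, fun h => h hyU, ?_⟩
      rintro ⟨-, -, hnscc⟩
      apply hnscc
      constructor
      · right
        exact ⟨1, fun i => if i = 0 then x else y, by simp, by simp,
          fun i hi => by
            interval_cases i
            simpa using hstep⟩
      · right
        exact ⟨1, fun i => if i = 0 then y else x, by simp, by simp,
          fun i hi => by
            interval_cases i
            simpa using hyx⟩
    · -- case (iii)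
      right; right
      refine ⟨fun h => hyx h.1, fun h => h hyU, hyU, ?_, ?_⟩
      · -- MuchLT (deg x) (deg y)
        have hpi : G.pi U y x = rp (G.p y x) := by simp [Graph.pi, hyU]
        have hnopos : ∀ c : ℚ, 0 < c → G.p y x < (c : K) := by
          intro c hc
          by_contra hle
          push_neg at hle
          exact hyx (hpi ▸ rp_pos_of c hc hle (G.p_le_one hdeg y x))
        intro c hc
        have hq0 : (0 : K) < (q : K) := by exact_mod_cast hq
        have hw : (q : K) * G.deg x ≤ G.w x y := by
          rw [Graph.p, le_div_iff₀ (hdeg x)] at hqle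
          linarith
        have hwy : G.w x y / G.deg y < ((c * q : ℚ) : K) := by
          have := hnopos (c * q) (by positivity)
          rw [Graph.p, G.symm] at this
          exact this
        have hc0 : (0 : K) < (c : K) := by exact_mod_cast hc
        rw [div_lt_iff₀ (hdeg y)] at hwy ⊢
        push_cast at hwy
        nlinarith [hdeg x, hdeg y]
      · -- ¬ SameSCC
        rintro ⟨-, hreach⟩
        obtain ⟨C, hC, hle⟩ := reaches_deg_le G hdeg U hreach
        -- deg y ≤ C * deg x, but MuchLT (deg x) (deg y)
        have hpi : G.pi U y x = rp (G.p y x) := by simp [Graph.pi, hyU]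
        have hnopos : ∀ c : ℚ, 0 < c → G.p y x < (c : K) := by
          intro c hc
          by_contra hle'
          push_neg at hle'
          exact hyx (hpi ▸ rp_pos_of c hc hle' (G.p_le_one hdeg y x))
        have hq0 : (0 : K) < (q : K) := by exact_mod_cast hq
        have hw : (q : K) * G.deg x ≤ G.w x y := by
          rw [Graph.p, le_div_iff₀ (hdeg x)] at hqle
          linarith
        -- p y x < q / (2 C)
        have hwy : G.w x y / G.deg y < ((q / (2 * C) : ℚ) : K) := by
          have := hnopos (q / (2 * C)) (by positivity)
          rw [Graph.p, G.symm] at this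
          exact this
        have hC0 : (0 : K) < (C : K) := by exact_mod_cast hC
        rw [div_lt_iff₀ (hdeg y)] at hwy
        push_cast at hwy
        -- q * deg x ≤ w x y < q/(2C) * deg y ≤ q/(2C) * C * deg x = q/2 * deg x
        have h3 : (q : K) / (2 * (C : K)) * G.deg y
            ≤ (q : K) / (2 * (C : K)) * ((C : K) * G.deg x) :=
          mul_le_mul_of_nonneg_left hle (by positivity)
        have h4 : (q : K) / (2 * (C : K)) * ((C : K) * G.deg x)
            = (q : K) / 2 * G.deg x := by
          field_simp
        nlinarith [hdeg x, hq0]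
  · -- case (ii)
    right; left
    have hpix : G.pi U y x = 0 := by
      simp [Graph.pi, hyU, Ne.symm hne]
    refine ⟨?_, hyU, ?_⟩
    · rintro ⟨h, -⟩; rw [hpix] at h; exact lt_irrefl _ h
    · rintro ⟨h, -, -⟩; exact hyU h

end NAG
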